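/- Let a, b, c be positive reals with b < 1 and 0 < (b-1)^2 - 4*a*c < 1, and let F(x) = a*x^2 + b*x + c with smaller fixed point x* = (-(b-1) - sqrt((b-1)^2-4ac))/(2a). Then F maps the interval [c, x*] into itself and F is a contraction on [c, x*]: for all x, y in [c, x*], |F(x) - F(y)| ≤ L*|x - y| with L = 1 - sqrt((b-1)^2 - 4*a*c) < 1. -/

import Mathlib

/-- With `F x = a x² + b x + c`, `a, b, c > 0`, `b < 1`,
`0 < (b-1)² - 4ac < 1`, and smaller fixed point
`x* = (-(b-1) - √((b-1)² - 4ac)) / (2a)`, the map `F` sends `[c, x*]` into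
itself and is a contraction there with constant
`L = 1 - √((b-1)² - 4ac) < 1`. -/
theorem stmt1 (a b c : ℝ) (ha : 0 < a) (hb : 0 < b) (hc : 0 < c)
    (hb1 : b < 1)
    (hdisc0 : 0 < (b - 1) ^ 2 - 4 * a * c)
    (hdisc1 : (b - 1) ^ 2 - 4 * a * c < 1) :
    (∀ x ∈ Set.Icc c ((-(b - 1) - Real.sqrt ((b - 1) ^ 2 - 4 * a * c)) / (2 * a)),
      a * x ^ 2 + b * x + c ∈
        Set.Icc c ((-(b - 1) - Real.sqrt ((b - 1) ^ 2 - 4 * a * c)) / (2 * a))) ∧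
    (∀ x ∈ Set.Icc c ((-(b - 1) - Real.sqrt ((b - 1) ^ 2 - 4 * a * c)) / (2 * a)),
      ∀ y ∈ Set.Icc c ((-(b - 1) - Real.sqrt ((b - 1) ^ 2 - 4 * a * c)) / (2 * a)),
        |(a * x ^ 2 + b * x + c) - (a * y ^ 2 + b * y + c)| ≤
          (1 - Real.sqrt ((b - 1) ^ 2 - 4 * a * c)) * |x - y|) ∧
    1 - Real.sqrt ((b - 1) ^ 2 - 4 * a * c) < 1 := by
  set s := Real.sqrt ((b - 1) ^ 2 - 4 * a * c) with hs
  have hs0 : 0 ≤ s := Real.sqrt_nonneg _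
  have hs2 : s ^ 2 = (b - 1) ^ 2 - 4 * a * c := Real.sq_sqrt hdisc0.le
  have hspos : 0 < s := Real.sqrt_pos.mpr hdisc0
  have hslt1 : s < 1 := by nlinarith [hs2]
  set t := (-(b - 1) - s) / (2 * a) with ht
  have h2a : (0:ℝ) < 2 * a := by positivity
  have hct : c ≤ t := by
    rw [ht, le_div_iff₀ h2a]
    have h1 : s ≤ (1 - b) - 2 * a * c := by
      have h2 : (b - 1) ^ 2 - 4 * a * c ≤ ((1 - b) - 2 * a * c) ^ 2 := by nlinarith [mul_pos (mul_pos ha hc) hb, mul_pos (mul_pos ha hc) (mul_pos ha hc)]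
      have h3 : 0 ≤ (1 - b) - 2 * a * c := by nlinarith
      calc s ≤ Real.sqrt (((1 - b) - 2 * a * c) ^ 2) := Real.sqrt_le_sqrt h2
        _ = (1 - b) - 2 * a * c := Real.sqrt_sq h3
    linarith
  have hfix : a * t ^ 2 + b * t + c = t := by
    rw [ht]; field_simp; linear_combination hs2
  have hder : 2 * a * t + b = 1 - s := by
    rw [ht]; field_simp; ring
  refine ⟨?_, ?_, by linarith⟩
  · rintro x ⟨hx1, hx2⟩
    constructor
    · nlinarith
    · nlinarith [hfix, mul_nonneg (mul_nonneg ha.le (by linarith : (0:ℝ) ≤ t - x))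
        (by nlinarith : (0:ℝ) ≤ t + x)]
  · rintro x ⟨hx1, hx2⟩ y ⟨hy1, hy2⟩
    have hfac : (a * x ^ 2 + b * x + c) - (a * y ^ 2 + b * y + c)
        = (x - y) * (a * (x + y) + b) := by ring
    rw [hfac, abs_mul, mul_comm]
    apply mul_le_mul _ le_rfl (abs_nonneg _) (by linarith)
    rw [abs_of_nonneg (by nlinarith : (0:ℝ) ≤ a * (x + y) + b)]
    nlinarith [hder]
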